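/- Let α1 be a Perron number of degree 2 with conjugate α2, and suppose m1 > m2 are integers with α1^{m1} α2^{m2} = 1. Then this leads to a contradiction; i.e., every relation α1^{m1} α2^{m2} = 1 with integer exponents has m1 = m2. -/

import Mathlib

/-- `α1` is a Perron number of degree 2 with (real) conjugate `α2`. -/
def IsPerronQuadratic (α1 α2 : ℝ) : Prop :=
  1 < α1 ∧ |α2| < α1 ∧
  ∃ p : Polynomial ℤ, p.Monic ∧ Irreducible p ∧ p.natDegree = 2 ∧
    (p.map (Int.castRingHom ℂ)).roots = {(α1 : ℂ), (α2 : ℂ)}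

open Polynomial in
/-- An irreducible monic quadratic integer polynomial has nonzero constant coefficient. -/
lemma PerronAux.coeff_zero_ne_zero_of_irred {p : ℤ[X]} (hmon : p.Monic) (hirr : Irreducible p)
    (hdeg : p.natDegree = 2) : p.coeff 0 ≠ 0 := by
  intro h0
  obtain ⟨b, hb⟩ := X_dvd_iff.mpr h0
  rcases hirr.isUnit_or_isUnit hb with hu | hu
  · exact Polynomial.not_isUnit_X hu
  · have hb0 : b ≠ 0 := by
      rintro rfl
      simp at hb
      exact hmon.ne_zero hb
    have := Polynomial.natDegree_mul (X_ne_zero (R := ℤ)) hb0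
    rw [← hb, hdeg, natDegree_X, natDegree_eq_zero_of_isUnit hu] at this
    omega

open Polynomial in
/-- If a rational power relation holds, the conjugate has the same power. -/
lemma PerronAux.pow_eq_of_rat (α1 α2 : ℝ) (p : ℤ[X]) (hmon : p.Monic) (hirr : Irreducible p)
    (hroots : (p.map (Int.castRingHom ℂ)).roots = {(α1 : ℂ), (α2 : ℂ)})
    (k : ℕ) (q : ℚ) (hq : α1 ^ k = (q : ℝ)) :
    α2 ^ k = α1 ^ k := by
  set pQ : ℚ[X] := p.map (Int.castRingHom ℚ) with hpQ
  have hQmon : pQ.Monic := hmon.map _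
  have hQirr : Irreducible pQ :=
    (IsPrimitive.Int.irreducible_iff_irreducible_map_cast hmon.isPrimitive).mp hirr
  have hPne : (p.map (Int.castRingHom ℂ)) ≠ 0 := (hmon.map _).ne_zero
  have hmemroots : ∀ z : ℂ, z ∈ (p.map (Int.castRingHom ℂ)).roots →
      Polynomial.aeval z pQ = 0 := by
    intro z hz
    have hz0 : (p.map (Int.castRingHom ℂ)).eval z = 0 :=
      (mem_roots hPne).mp hz
    have : Polynomial.aeval z pQ = (p.map (Int.castRingHom ℂ)).eval z := by
      rw [hpQ, ← algebraMap_int_eq, aeval_map_algebraMap, aeval_def, ← eval_map,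
        algebraMap_int_eq]
    rw [this, hz0]
  have h1 : Polynomial.aeval (α1 : ℂ) pQ = 0 := by
    apply hmemroots; rw [hroots]; simp
  have h2 : Polynomial.aeval (α2 : ℂ) pQ = 0 := by
    apply hmemroots; rw [hroots]; simp
  have hmin : minpoly ℚ ((α1:ℂ)) = pQ :=
    (minpoly.eq_of_irreducible_of_monic hQirr h1 hQmon).symm
  set g : ℚ[X] := X ^ k - C q with hg
  have hgα1 : Polynomial.aeval ((α1:ℂ)) g = 0 := by
    simp [hg]
    have : ((α1:ℂ)) ^ k = (q : ℂ) := by exact_mod_cast congrArg (Complex.ofReal) hq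
    simpa [sub_eq_zero] using this
  obtain ⟨r, hr⟩ : pQ ∣ g := hmin ▸ minpoly.dvd ℚ _ hgα1
  have : Polynomial.aeval ((α2:ℂ)) g = 0 := by
    rw [hr, map_mul, h2, zero_mul]
  have h2k : ((α2:ℂ)) ^ k = (q : ℂ) := by
    simpa [hg, sub_eq_zero] using this
  have : α2 ^ k = (q : ℝ) := by exact_mod_cast h2k
  rw [this, hq]

/-- For a quadratic Perron number `α1` with conjugate `α2`, every relation
`α1^m1 · α2^m2 = 1` with integer exponents has `m1 = m2`. -/
theorem quadratic_relations_have_equal_exponents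
    (α1 α2 : ℝ) (h : IsPerronQuadratic α1 α2) :
    ∀ m1 m2 : ℤ, α1 ^ m1 * α2 ^ m2 = 1 → m1 = m2 := by
  open Polynomial in
  obtain ⟨hα1, hα2, p, hmon, hirr, hdeg, hroots⟩ := h
  intro m1 m2 hrel
  by_contra hne
  have hα1pos : (0:ℝ) < α1 := zero_lt_one.trans hα1
  have hα1ne : α1 ≠ 0 := ne_of_gt hα1pos
  set P := p.map (Int.castRingHom ℂ) with hP
  have hPmon : P.Monic := hmon.map _
  have hPdeg : P.natDegree = 2 := by
    rw [hP, natDegree_map_eq_of_injective (f := Int.castRingHom ℂ)]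
    · exact hdeg
    · exact Int.cast_injective
  have hsplit : P.Splits := IsAlgClosed.splits P
  have hprod := hsplit.coeff_zero_eq_prod_roots_of_monic hPmon
  rw [hroots, hPdeg] at hprod
  simp [Multiset.prod_cons] at hprod
  have hcoeff : (p.coeff 0 : ℂ) = (α1 : ℂ) * (α2 : ℂ) := by
    rw [← hprod, hP, coeff_map]; rfl
  have hN : ((p.coeff 0 : ℤ) : ℝ) = α1 * α2 := by
    have := hcoeff
    push_cast at this ⊢
    exact_mod_cast this
  set N : ℤ := p.coeff 0 with hNdef
  have hN0 : N ≠ 0 := PerronAux.coeff_zero_ne_zero_of_irred hmon hirr hdeg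
  have hα2ne : α2 ≠ 0 := by
    intro hz
    rw [hz, mul_zero] at hN
    exact hN0 (by exact_mod_cast hN)
  -- derive a rational power relation α1 ^ k = q with k > 0
  have key : α1 ^ (m1 - m2) = (N:ℝ) ^ (-m2) := by
    rw [zpow_sub₀ hα1ne, hN, mul_zpow, zpow_neg]
    field_simp
    rw [zpow_neg]; exact eq_inv_of_mul_eq_one_left hrel
  have hex : ∃ (k : ℕ) (q : ℚ), 0 < k ∧ α1 ^ k = (q : ℝ) := by
    rcases lt_or_gt_of_ne hne with hlt | hlt
    · refine ⟨(m2 - m1).toNat, (N:ℚ) ^ m2, by omega, ?_⟩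
      have h1 : α1 ^ ((m2 - m1).toNat : ℤ) = (N:ℝ) ^ m2 := by
        rw [Int.toNat_of_nonneg (by omega)]
        have : α1 ^ (m2 - m1) = ((N:ℝ) ^ (-m2))⁻¹ := by
          rw [← key, ← zpow_neg, neg_sub]
        rw [this, ← zpow_neg, neg_neg]
      rw [← zpow_natCast α1, h1]
      push_cast
      ring
    · refine ⟨(m1 - m2).toNat, (N:ℚ) ^ (-m2), by omega, ?_⟩
      have h1 : α1 ^ ((m1 - m2).toNat : ℤ) = (N:ℝ) ^ (-m2) := by
        rw [Int.toNat_of_nonneg (by omega)]; exact key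
      rw [← zpow_natCast α1, h1]
      push_cast
      ring
  obtain ⟨k, q, hk, hq⟩ := hex
  have heq : α2 ^ k = α1 ^ k :=
    PerronAux.pow_eq_of_rat α1 α2 p hmon hirr hroots k q hq
  -- contradiction with |α2| < α1
  have h1 : |α2| ^ k < α1 ^ k := pow_lt_pow_left₀ hα2 (abs_nonneg α2) hk.ne'
  have h2 : |α2| ^ k = α1 ^ k := by
    rw [← abs_pow, heq, abs_pow, abs_of_pos hα1pos]
  exact absurd h2 (ne_of_lt h1)
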